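/- Let k ≥ 1 and let I, J ∈ [n]^{2k−1} be distinct-element sequences whose decomposition into minimal equal sub-pairs uses at most k sets. Then the determinant of the (2k−1) × (2k−1) matrix V_{I,J}(X) with rows (1, X_{I_s}, …, X_{I_s}^{k−1}, X_{J_s}, …, X_{J_s}^{k−1}) for s = 1,…,2k−1 is a nonzero polynomial in ℤ[X₁,…,X_n]; moreover, its expansion as a sum over the (2k−1)! permutations contains a monomial obtained from exactly one permutation, hence with coefficient ±1. -/

import Mathlib

open MvPolynomial

/-- `(I_A, J_A)` is a minimal equal sub-pair of `(I, J)`. -/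
def MinimalEqualSubPair {n s : ℕ} (I J : Fin s → Fin n) (A : Finset (Fin s)) : Prop :=
  A.Nonempty ∧ A.image I = A.image J ∧
    ∀ A' ⊂ A, A'.Nonempty → A'.image I ≠ A'.image J

/-- `(I_B, J_B)` is free of equalities. -/
def FreeOfEqualities {n s : ℕ} (I J : Fin s → Fin n) (B : Finset (Fin s)) : Prop :=
  ∀ A ⊆ B, A.Nonempty → A.image I ≠ A.image J

/-- The `(2k-1) × (2k-1)` matrix `V_{I,J}` with `s`-th row
`(1, x_{I_s}, …, x_{I_s}^{k-1}, x_{J_s}, …, x_{J_s}^{k-1})`. -/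
def Vmat {R : Type*} [CommRing R] (k n : ℕ) (x : Fin n → R)
    (I J : Fin (2 * k - 1) → Fin n) :
    Matrix (Fin (2 * k - 1)) (Fin (2 * k - 1)) R :=
  Matrix.of fun s c =>
    if (c : ℕ) = 0 then 1
    else if (c : ℕ) < k then x (I s) ^ (c : ℕ)
    else x (J s) ^ ((c : ℕ) - k + 1)

namespace S7


variable {k n : ℕ}

def iexp (k c : ℕ) : ℕ := if c < k then c else 0
def jexp (k c : ℕ) : ℕ := if k ≤ c then c - k + 1 else 0

noncomputable def colE (I J : Fin (2*k-1) → Fin n) (s : Fin (2*k-1)) (c : ℕ) : Fin n →₀ ℕ :=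
  Finsupp.single (I s) (iexp k c) + Finsupp.single (J s) (jexp k c)

/-- pointwise exponent function -/
def DF (I J : Fin (2*k-1) → Fin n) (g : Fin (2*k-1) → ℕ) (v : Fin n) : ℕ :=
  (∑ s, if I s = v then iexp k (g s) else 0) + (∑ s, if J s = v then jexp k (g s) else 0)

noncomputable def Dr (I J : Fin (2*k-1) → Fin n) (g : Fin (2*k-1) → ℕ) : Fin n →₀ ℕ :=
  ∑ s, colE I J s (g s)

lemma Dr_apply (I J : Fin (2*k-1) → Fin n) (g : Fin (2*k-1) → ℕ) (v : Fin n) :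
    Dr I J g v = DF I J g v := by
  classical
  unfold Dr DF colE
  rw [Finset.sum_apply']
  rw [← Finset.sum_add_distrib]
  congr 1
  funext s
  simp [Finsupp.single_apply]

lemma vmat_entry (hk : 1 ≤ k) (I J : Fin (2*k-1) → Fin n) (s c : Fin (2*k-1)) :
    Vmat k n (fun i => (X i : MvPolynomial (Fin n) ℤ)) I J s c
      = monomial (colE I J s (c:ℕ)) 1 := by
  unfold Vmat colE iexp jexp
  rw [Matrix.of_apply]
  rcases Nat.eq_zero_or_pos (c:ℕ) with h0 | h0
  · simp only [h0, if_pos rfl]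
    have : ¬ (k ≤ 0) := by omega
    simp [this, Nat.lt_of_lt_of_le Nat.zero_lt_one hk, monomial_zero']
  · have hne : ¬ ((c:ℕ) = 0) := by omega
    rw [if_neg hne]
    by_cases hlt : (c:ℕ) < k
    · have : ¬ (k ≤ (c:ℕ)) := by omega
      simp [hlt, this, X_pow_eq_monomial]
    · have hle : k ≤ (c:ℕ) := by omega
      simp [hlt, hle, X_pow_eq_monomial]

lemma prod_monomial {ι : Type*} (S : Finset ι) (f : ι → (Fin n →₀ ℕ)) :
    (∏ i ∈ S, (monomial (f i) (1:ℤ))) = monomial (∑ i ∈ S, f i) 1 := by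
  classical
  induction S using Finset.induction_on with
  | empty => simp [monomial_zero']
  | insert a s hx ih =>
      rw [Finset.prod_insert hx, Finset.sum_insert hx, ih, monomial_mul, one_mul]

lemma det_coeff (hk : 1 ≤ k) (I J : Fin (2*k-1) → Fin n) (d : Fin n →₀ ℕ) :
    ((Vmat k n (fun i => (X i : MvPolynomial (Fin n) ℤ)) I J).det).coeff d
      = ∑ σ : Equiv.Perm (Fin (2*k-1)),
          (Equiv.Perm.sign σ : ℤ) * (if Dr I J (fun e => (σ e : ℕ)) = d then 1 else 0) := by
  classical
  rw [Matrix.det_apply]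
  rw [coeff_sum]
  have hterm : ∀ σ : Equiv.Perm (Fin (2*k-1)),
      coeff d (Equiv.Perm.sign σ • ∏ i, Vmat k n (fun i => (X i : MvPolynomial (Fin n) ℤ)) I J (σ i) i)
        = (Equiv.Perm.sign σ : ℤ) * (if Dr I J (fun e => ((σ⁻¹ e : Fin (2*k-1)) : ℕ)) = d then 1 else 0) := by
    intro σ
    have h1 : (∏ i, Vmat k n (fun i => (X i : MvPolynomial (Fin n) ℤ)) I J (σ i) i)
        = monomial (∑ i, colE I J (σ i) (i:ℕ)) 1 := by
      rw [← prod_monomial]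
      refine Finset.prod_congr rfl ?_
      intro i _
      exact vmat_entry hk I J (σ i) i
    have h2 : (∑ i, colE I J (σ i) (i:ℕ)) = Dr I J (fun e => ((σ⁻¹ e : Fin (2*k-1)) : ℕ)) := by
      unfold Dr
      rw [← Equiv.sum_comp σ⁻¹ (fun i => colE I J (σ i) (i:ℕ))]
      refine Finset.sum_congr rfl ?_
      intro s _
      simp
    rw [h1, h2, coeff_smul, coeff_monomial]
    rcases Int.units_eq_one_or (Equiv.Perm.sign σ) with h | h <;>
      simp [h] <;> split <;> simp_all
  rw [Finset.sum_congr rfl (fun σ _ => hterm σ)]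
  rw [← Equiv.sum_comp (Equiv.inv (Equiv.Perm (Fin (2*k-1))))
      (fun σ => (Equiv.Perm.sign σ : ℤ) * (if Dr I J (fun e => ((σ⁻¹ e : Fin (2*k-1)) : ℕ)) = d then 1 else 0))]
  refine Finset.sum_congr rfl ?_
  intro σ _
  simp [Equiv.inv_apply]


inductive VStep (k : ℕ) where
  | top (sO sI : Fin (2*k-1))
  | ist (s : Fin (2*k-1))
  | jst (s : Fin (2*k-1))

def stepPins (k cI cJ : ℕ) : VStep k → List (Fin (2*k-1) × ℕ)
  | .top sO sI => [(sO, k-1-cI), (sI, 2*k-2-cJ)]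
  | .ist s => [(s, k-1-cI)]
  | .jst s => [(s, 2*k-2-cJ)]

def icnt : VStep k → ℕ
  | .top _ _ => 1 | .ist _ => 1 | .jst _ => 0
def jcnt : VStep k → ℕ
  | .top _ _ => 1 | .ist _ => 0 | .jst _ => 1

def cntI (L : List (VStep k)) : ℕ := (L.map icnt).sum
def cntJ (L : List (VStep k)) : ℕ := (L.map jcnt).sum

@[simp] lemma cntI_nil : cntI ([] : List (VStep k)) = 0 := rfl
@[simp] lemma cntJ_nil : cntJ ([] : List (VStep k)) = 0 := rfl
@[simp] lemma cntI_cons (st : VStep k) (L : List (VStep k)) :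
    cntI (st :: L) = icnt st + cntI L := by simp [cntI]
@[simp] lemma cntJ_cons (st : VStep k) (L : List (VStep k)) :
    cntJ (st :: L) = jcnt st + cntJ L := by simp [cntJ]
lemma cntI_append (L1 L2 : List (VStep k)) : cntI (L1 ++ L2) = cntI L1 + cntI L2 := by
  simp [cntI]
lemma cntJ_append (L1 L2 : List (VStep k)) : cntJ (L1 ++ L2) = cntJ L1 + cntJ L2 := by
  simp [cntJ]

def allPins (k : ℕ) : ℕ → ℕ → List (VStep k) → List (Fin (2*k-1) × ℕ)
  | _, _, [] => []
  | cI, cJ, st :: L => stepPins k cI cJ st ++ allPins k (cI + icnt st) (cJ + jcnt st) L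

@[simp] lemma allPins_nil (cI cJ : ℕ) : allPins k cI cJ [] = [] := rfl
@[simp] lemma allPins_cons (cI cJ : ℕ) (st : VStep k) (L : List (VStep k)) :
    allPins k cI cJ (st :: L) = stepPins k cI cJ st ++ allPins k (cI + icnt st) (cJ + jcnt st) L := rfl

lemma allPins_append (cI cJ : ℕ) (L1 L2 : List (VStep k)) :
    allPins k cI cJ (L1 ++ L2)
      = allPins k cI cJ L1 ++ allPins k (cI + cntI L1) (cJ + cntJ L1) L2 := by
  induction L1 generalizing cI cJ with
  | nil => simp
  | cons st L ih => simp [ih, List.append_assoc]; ring_nf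

def Valid (I J : Fin (2*k-1) → Fin n) : List (Fin (2*k-1) × ℕ) → ℕ → ℕ → List (VStep k) → Prop
  | _, _, _, [] => True
  | done, cI, cJ, .top sO sI :: L =>
      I sO = J sI ∧ cI < k-1 ∧ cJ < k-1 ∧
      Valid I J (done ++ stepPins k cI cJ (.top sO sI)) (cI+1) (cJ+1) L
  | done, cI, cJ, .ist s :: L =>
      cI < k-1 ∧ (∀ s', J s' = I s → ∃ c, (s', c) ∈ done) ∧
      Valid I J (done ++ stepPins k cI cJ (.ist s)) (cI+1) cJ L
  | done, cI, cJ, .jst s :: L =>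
      cJ < k-1 ∧ ((∀ s', I s' = J s → ∃ c, (s', c) ∈ done) ∨ cI = k-1) ∧
      Valid I J (done ++ stepPins k cI cJ (.jst s)) cI (cJ+1) L

def aval : List (Fin (2*k-1) × ℕ) → Fin (2*k-1) → ℕ
  | [], _ => 0
  | (a, c) :: l, e => if a = e then c else aval l e

def keys (l : List (Fin (2*k-1) × ℕ)) : List (Fin (2*k-1)) := l.map Prod.fst

lemma mem_keys {l : List (Fin (2*k-1) × ℕ)} {e : Fin (2*k-1)} :
    e ∈ keys l ↔ ∃ c, (e, c) ∈ l := by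
  constructor
  · intro h
    obtain ⟨p, hp, he⟩ := List.mem_map.mp h
    exact ⟨p.2, by rw [← he]; simpa using hp⟩
  · rintro ⟨c, h⟩
    have := List.mem_map_of_mem (f := Prod.fst) h
    simpa [keys] using this

lemma aval_eq_of_mem {l : List (Fin (2*k-1) × ℕ)} (hn : (keys l).Nodup)
    {e : Fin (2*k-1)} {c : ℕ} (h : (e, c) ∈ l) : aval l e = c := by
  induction l with
  | nil => simp at h
  | cons p l ih =>
      obtain ⟨a, c'⟩ := p
      simp only [keys, List.map_cons, List.nodup_cons] at hn
      rcases List.mem_cons.mp h with h | h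
      · injection h with h1 h2
        subst h1; subst h2
        simp [aval]
      · have hae : a ≠ e := by
          rintro rfl
          exact hn.1 (List.mem_map_of_mem (f := Prod.fst) h)
        simp only [aval, if_neg hae]
        exact ih hn.2 h

lemma aval_eq_zero {l : List (Fin (2*k-1) × ℕ)} {e : Fin (2*k-1)}
    (h : e ∉ keys l) : aval l e = 0 := by
  induction l with
  | nil => rfl
  | cons p l ih =>
      obtain ⟨a, c'⟩ := p
      simp only [keys, List.map_cons, List.mem_cons] at h
      push_neg at h
      have hae : a ≠ e := fun hh => h.1 hh.symm
      simp only [aval, if_neg hae]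
      exact ih h.2

lemma pins_val_range {I J : Fin (2*k-1) → Fin n} :
    ∀ (L : List (VStep k)) (done : List (Fin (2*k-1) × ℕ)) (cI cJ : ℕ),
      Valid I J done cI cJ L →
      ∀ p ∈ allPins k cI cJ L,
        (1 ≤ p.2 ∧ p.2 ≤ k-1-cI) ∨ (k ≤ p.2 ∧ p.2 ≤ 2*k-2-cJ) := by
  intro L
  induction L with
  | nil => intro done cI cJ _ p hp; simp at hp
  | cons st L ih =>
      intro done cI cJ hv p hp
      match st with
      | .top sO sI =>
          obtain ⟨h1, h2, h3, hv'⟩ := hv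
          simp only [allPins_cons, stepPins, List.mem_append, List.mem_cons] at hp
          rcases hp with (h | h | h) | h
          · subst h; left; simp; omega
          · subst h; right; simp; omega
          · simp at h
          · rcases ih _ _ _ hv' p h with h' | h'
            · left; omega
            · right; omega
      | .ist s =>
          obtain ⟨h2, _, hv'⟩ := hv
          simp only [allPins_cons, stepPins, List.mem_append, List.mem_cons] at hp
          rcases hp with (h | h) | h
          · subst h; left; simp; omega
          · simp at h
          · rcases ih _ _ _ hv' p h with h' | h'
            · left; omega
            · right; omega
      | .jst s =>
          obtain ⟨h2, _, hv'⟩ := hv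
          simp only [allPins_cons, stepPins, List.mem_append, List.mem_cons] at hp
          rcases hp with (h | h) | h
          · subst h; right; simp; omega
          · simp at h
          · rcases ih _ _ _ hv' p h with h' | h'
            · left; omega
            · right; omega

lemma pins_noI {I J : Fin (2*k-1) → Fin n} :
    ∀ (L : List (VStep k)) (done : List (Fin (2*k-1) × ℕ)) (cI cJ : ℕ),
      Valid I J done cI cJ L → cntI L = 0 →
      ∀ p ∈ allPins k cI cJ L, k ≤ p.2 := by
  intro L
  induction L with
  | nil => intro done cI cJ _ _ p hp; simp at hp
  | cons st L ih =>
      intro done cI cJ hv hc p hp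
      match st with
      | .top sO sI => simp [icnt] at hc
      | .ist s => simp [icnt] at hc
      | .jst s =>
          obtain ⟨h2, _, hv'⟩ := hv
          simp only [allPins_cons, stepPins, List.mem_append, List.mem_cons] at hp
          simp [icnt] at hc
          rcases hp with (h | h) | h
          · subst h; simp; omega
          · simp at h
          · exact ih _ _ _ hv' hc p h

lemma pins_length {L : List (VStep k)} :
    ∀ (cI cJ : ℕ), (allPins k cI cJ L).length = cntI L + cntJ L := by
  induction L with
  | nil => simp
  | cons st L ih =>
      intro cI cJ
      match st with
      | .top sO sI => simp [stepPins, ih, icnt, jcnt]; ring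
      | .ist s => simp [stepPins, ih, icnt, jcnt]; ring
      | .jst s => simp [stepPins, ih, icnt, jcnt]; ring

lemma pins_snd_nodup {I J : Fin (2*k-1) → Fin n} :
    ∀ (L : List (VStep k)) (done : List (Fin (2*k-1) × ℕ)) (cI cJ : ℕ),
      Valid I J done cI cJ L →
      ((allPins k cI cJ L).map Prod.snd).Nodup := by
  intro L
  induction L with
  | nil => intro done cI cJ _; simp
  | cons st L ih =>
      intro done cI cJ hv
      match st with
      | .top sO sI =>
          obtain ⟨h1, h2, h3, hv'⟩ := hv
          have htail := ih _ _ _ hv'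
          have hrange := pins_val_range _ _ _ _ hv'
          simp only [allPins_cons, stepPins, icnt, jcnt, List.map_append, List.map_cons,
            List.map_nil]
          rw [List.nodup_append]
          refine ⟨?_, htail, ?_⟩
          · simp; omega
          · intro a ha _ hb rfl
            obtain ⟨⟨e, c⟩, hec, hc⟩ := List.mem_map.mp hb
            have := hrange (e, c) hec
            simp only at this hc
            subst hc
            simp at ha
            rcases ha with rfl | rfl <;> omega
      | .ist s =>
          obtain ⟨h2, hp, hv'⟩ := hv
          have htail := ih _ _ _ hv'
          have hrange := pins_val_range _ _ _ _ hv'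
          simp only [allPins_cons, stepPins, icnt, jcnt, List.map_append, List.map_cons,
            List.map_nil]
          rw [List.nodup_append]
          refine ⟨by simp, htail, ?_⟩
          intro a ha _ hb rfl
          obtain ⟨⟨e, c⟩, hec, hc⟩ := List.mem_map.mp hb
          have := hrange (e, c) hec
          simp only at this hc
          subst hc
          simp at ha
          subst ha
          omega
      | .jst s =>
          obtain ⟨h2, hp, hv'⟩ := hv
          have htail := ih _ _ _ hv'
          have hrange := pins_val_range _ _ _ _ hv'
          simp only [allPins_cons, stepPins, icnt, jcnt, List.map_append, List.map_cons,
            List.map_nil]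
          rw [List.nodup_append]
          refine ⟨by simp, htail, ?_⟩
          intro a ha _ hb rfl
          obtain ⟨⟨e, c⟩, hec, hc⟩ := List.mem_map.mp hb
          have := hrange (e, c) hec
          simp only at this hc
          subst hc
          simp at ha
          subst ha
          omega

lemma pins_cover_I {I J : Fin (2*k-1) → Fin n} :
    ∀ (L : List (VStep k)) (done : List (Fin (2*k-1) × ℕ)) (cI cJ : ℕ),
      Valid I J done cI cJ L →
      ∀ c, 1 ≤ c → c ≤ k-1-cI → k-1 < c + cI + cntI L →
        ∃ e, (e, c) ∈ allPins k cI cJ L := by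
  intro L
  induction L with
  | nil => intro done cI cJ _ c h1 h2 h3; simp at h3 ⊢; omega
  | cons st L ih =>
      intro done cI cJ hv c h1 h2 h3
      match st with
      | .top sO sI =>
          obtain ⟨hh, h4, h5, hv'⟩ := hv
          by_cases hc : c = k-1-cI
          · exact ⟨sO, by simp [stepPins, hc]⟩
          · obtain ⟨e, he⟩ := ih _ _ _ hv' c h1 (by omega) (by simp [icnt] at h3 ⊢; omega)
            exact ⟨e, by simp only [allPins_cons, List.mem_append, icnt, jcnt]; right; exact he⟩
      | .ist s =>
          obtain ⟨h4, _, hv'⟩ := hv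
          by_cases hc : c = k-1-cI
          · exact ⟨s, by simp [stepPins, hc]⟩
          · obtain ⟨e, he⟩ := ih _ _ _ hv' c h1 (by omega) (by simp [icnt] at h3 ⊢; omega)
            exact ⟨e, by simp only [allPins_cons, List.mem_append, icnt, jcnt]; right; exact he⟩
      | .jst s =>
          obtain ⟨h4, _, hv'⟩ := hv
          obtain ⟨e, he⟩ := ih _ _ _ hv' c h1 (by omega) (by simp [icnt] at h3 ⊢; omega)
          exact ⟨e, by simp only [allPins_cons, List.mem_append, icnt, jcnt]; right; exact he⟩

lemma pins_cover_J {I J : Fin (2*k-1) → Fin n} (hk : 1 ≤ k) :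
    ∀ (L : List (VStep k)) (done : List (Fin (2*k-1) × ℕ)) (cI cJ : ℕ),
      Valid I J done cI cJ L →
      ∀ c, k ≤ c → c ≤ 2*k-2-cJ → 2*k-2 < c + cJ + cntJ L →
        ∃ e, (e, c) ∈ allPins k cI cJ L := by
  intro L
  induction L with
  | nil => intro done cI cJ _ c h1 h2 h3; simp at h3 ⊢; omega
  | cons st L ih =>
      intro done cI cJ hv c h1 h2 h3
      match st with
      | .top sO sI =>
          obtain ⟨hh, h4, h5, hv'⟩ := hv
          by_cases hc : c = 2*k-2-cJ
          · exact ⟨sI, by simp [stepPins, hc]⟩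
          · obtain ⟨e, he⟩ := ih _ _ _ hv' c h1 (by omega) (by simp [jcnt] at h3 ⊢; omega)
            exact ⟨e, by simp only [allPins_cons, List.mem_append, icnt, jcnt]; right; exact he⟩
      | .ist s =>
          obtain ⟨h4, _, hv'⟩ := hv
          obtain ⟨e, he⟩ := ih _ _ _ hv' c h1 (by omega) (by simp [jcnt] at h3 ⊢; omega)
          exact ⟨e, by simp only [allPins_cons, List.mem_append, icnt, jcnt]; right; exact he⟩
      | .jst s =>
          obtain ⟨h4, _, hv'⟩ := hv
          by_cases hc : c = 2*k-2-cJ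
          · exact ⟨s, by simp [stepPins, hc]⟩
          · obtain ⟨e, he⟩ := ih _ _ _ hv' c h1 (by omega) (by simp [jcnt] at h3 ⊢; omega)
            exact ⟨e, by simp only [allPins_cons, List.mem_append, icnt, jcnt]; right; exact he⟩


lemma iexp_of_lt {c : ℕ} (h : c < k) : iexp k c = c := by simp [iexp, h]

lemma iexp_eq_val {c v : ℕ} (h : iexp k c = v) (hv : 1 ≤ v) : c = v := by
  unfold iexp at h; split at h <;> omega

lemma jexp_eq_val (hk : 1 ≤ k) {c v : ℕ} (h : jexp k c = v) (hv : 1 ≤ v) : c = k - 1 + v := by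
  unfold jexp at h
  by_cases hkc : k ≤ c
  · rw [if_pos hkc] at h; omega
  · rw [if_neg hkc] at h; omega

lemma sum_ite_unique {α : Type*} [Fintype α] [DecidableEq α] {β : Type*} [DecidableEq β]
    {g : α → β} (hg : Function.Injective g) (v : β) (s₀ : α) (h : g s₀ = v) (F : α → ℕ) :
    (∑ s, if g s = v then F s else 0) = F s₀ := by
  rw [Finset.sum_eq_single s₀]
  · simp [h]
  · intro b _ hb
    have : g b ≠ v := fun hbv => hb (hg (by rw [hbv, h]))
    simp [this]
  · intro hs; exact absurd (Finset.mem_univ s₀) hs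

lemma sum_ite_none {α : Type*} [Fintype α] [DecidableEq α] {β : Type*} [DecidableEq β]
    {g : α → β} (v : β) (h : ∀ s, g s ≠ v) (F : α → ℕ) :
    (∑ s, if g s = v then F s else 0) = 0 := by
  apply Finset.sum_eq_zero
  intro s _
  simp [h s]

lemma iexp_le_of_unpinned
    {done : List (Fin (2*k-1) × ℕ)} {ρ : Equiv.Perm (Fin (2*k-1))} {cI : ℕ}
    (hdone : ∀ p ∈ done, (ρ p.1 : ℕ) = p.2)
    (hIdone : ∀ c, k - cI ≤ c → c ≤ k-1 → ∃ e, (e, c) ∈ done)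
    {e : Fin (2*k-1)} (he : ∀ c, (e, c) ∉ done) : iexp k (ρ e : ℕ) ≤ k-1-cI := by
  unfold iexp
  split
  · rename_i hlt
    by_contra hgt
    push_neg at hgt
    obtain ⟨e', he'⟩ := hIdone (ρ e : ℕ) (by omega) (by omega)
    have h1 : (ρ e' : ℕ) = (ρ e : ℕ) := hdone (e', (ρ e : ℕ)) he'
    have h2 : e' = e := ρ.injective (Fin.val_injective h1)
    subst h2
    exact he _ he'
  · omega

lemma jexp_le_of_unpinned (hk : 1 ≤ k)
    {done : List (Fin (2*k-1) × ℕ)} {ρ : Equiv.Perm (Fin (2*k-1))} {cJ : ℕ}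
    (hdone : ∀ p ∈ done, (ρ p.1 : ℕ) = p.2)
    (hJdone : ∀ c, 2*k-1-cJ ≤ c → c ≤ 2*k-2 → ∃ e, (e, c) ∈ done)
    {e : Fin (2*k-1)} (he : ∀ c, (e, c) ∉ done) : jexp k (ρ e : ℕ) ≤ k-1-cJ := by
  unfold jexp
  split
  · rename_i hge
    by_contra hgt
    push_neg at hgt
    have hlt : (ρ e : ℕ) < 2*k-1 := (ρ e).isLt
    obtain ⟨e', he'⟩ := hJdone (ρ e : ℕ) (by omega) (by omega)
    have h1 : (ρ e' : ℕ) = (ρ e : ℕ) := hdone (e', (ρ e : ℕ)) he'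
    have h2 : e' = e := ρ.injective (Fin.val_injective h1)
    subst h2
    exact he _ he'
  · omega

theorem force_aux {I J : Fin (2*k-1) → Fin n} (hk : 1 ≤ k)
    (hI : Function.Injective I) (hJ : Function.Injective J)
    (ρ : Equiv.Perm (Fin (2*k-1))) (PF : List (Fin (2*k-1) × ℕ))
    (hkeys : (keys PF).Nodup)
    (hD : ∀ v, DF I J (fun e => (ρ e : ℕ)) v = DF I J (aval PF) v) :
    ∀ (L : List (VStep k)) (done : List (Fin (2*k-1) × ℕ)) (cI cJ : ℕ),
      Valid I J done cI cJ L →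
      PF = done ++ allPins k cI cJ L →
      cI + cntI L = k-1 → cJ + cntJ L = k-1 →
      (∀ p ∈ done, (ρ p.1 : ℕ) = p.2) →
      (∀ c, k - cI ≤ c → c ≤ k-1 → ∃ e, (e, c) ∈ done) →
      (∀ c, 2*k-1-cJ ≤ c → c ≤ 2*k-2 → ∃ e, (e, c) ∈ done) →
      ∀ p ∈ allPins k cI cJ L, (ρ p.1 : ℕ) = p.2 := by
  intro L
  induction L with
  | nil => intro done cI cJ _ _ _ _ _ _ _ p hp; simp at hp
  | cons st L ih =>
      intro done cI cJ hv hPF hcI hcJ hdone hIdone hJdone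
      have hsplit : ∀ e : Fin (2*k-1), e ∈ keys (allPins k cI cJ (st :: L)) →
          ∀ c, (e, c) ∉ done := by
        intro e hemem c hec
        rw [hPF] at hkeys
        unfold keys at hkeys
        rw [List.map_append, List.nodup_append] at hkeys
        exact hkeys.2.2 _ (List.mem_map_of_mem (f := Prod.fst) hec) _ hemem rfl
      have havalPF : ∀ (e : Fin (2*k-1)) (c : ℕ), (e, c) ∈ PF → aval PF e = c :=
        fun e c h => aval_eq_of_mem hkeys h
      match st with
      | .top sO sI =>
          obtain ⟨hu, h2, h3, hv'⟩ := hv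
          have hmemO : (sO, k-1-cI) ∈ PF := by
            rw [hPF]; simp [stepPins]
          have hmemI : (sI, 2*k-2-cJ) ∈ PF := by
            rw [hPF]; simp [stepPins]
          have hOk : ∀ c, (sO, c) ∉ done :=
            hsplit sO (mem_keys.mpr ⟨k-1-cI, by simp [stepPins]⟩)
          have hIk : ∀ c, (sI, c) ∉ done :=
            hsplit sI (mem_keys.mpr ⟨2*k-2-cJ, by simp [stepPins]⟩)
          have hDu := hD (I sO)
          simp only [DF] at hDu
          rw [sum_ite_unique hI (I sO) sO rfl, sum_ite_unique hJ (I sO) sI hu.symm,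
              sum_ite_unique hI (I sO) sO rfl, sum_ite_unique hJ (I sO) sI hu.symm] at hDu
          rw [havalPF sO _ hmemO, havalPF sI _ hmemI] at hDu
          have hia : iexp k (k-1-cI) = k-1-cI := iexp_of_lt (by omega)
          have hjb : jexp k (2*k-2-cJ) = k-1-cJ := by unfold jexp; split <;> omega
          rw [hia, hjb] at hDu
          have hle1 : iexp k (ρ sO : ℕ) ≤ k-1-cI :=
            iexp_le_of_unpinned hdone hIdone hOk
          have hle2 : jexp k (ρ sI : ℕ) ≤ k-1-cJ :=
            jexp_le_of_unpinned hk hdone hJdone hIk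
          have heq1 : iexp k (ρ sO : ℕ) = k-1-cI := by omega
          have heq2 : jexp k (ρ sI : ℕ) = k-1-cJ := by omega
          have hvO : (ρ sO : ℕ) = k-1-cI := iexp_eq_val heq1 (by omega)
          have hvI : (ρ sI : ℕ) = 2*k-2-cJ := by
            have := jexp_eq_val hk heq2 (by omega); omega
          -- recursion setup
          have hdone' : ∀ p ∈ done ++ stepPins k cI cJ (.top sO sI), (ρ p.1 : ℕ) = p.2 := by
            intro p hp
            rcases List.mem_append.mp hp with hp | hp
            · exact hdone p hp
            · simp [stepPins] at hp
              rcases hp with rfl | rfl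
              · exact hvO
              · exact hvI
          have hIdone' : ∀ c, k - (cI+1) ≤ c → c ≤ k-1 →
              ∃ e, (e, c) ∈ done ++ stepPins k cI cJ (.top sO sI) := by
            intro c hc1 hc2
            by_cases hc : c = k-1-cI
            · exact ⟨sO, by simp [stepPins, hc]⟩
            · obtain ⟨e, he⟩ := hIdone c (by omega) hc2
              exact ⟨e, List.mem_append_left _ he⟩
          have hJdone' : ∀ c, 2*k-1-(cJ+1) ≤ c → c ≤ 2*k-2 →
              ∃ e, (e, c) ∈ done ++ stepPins k cI cJ (.top sO sI) := by
            intro c hc1 hc2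
            by_cases hc : c = 2*k-2-cJ
            · exact ⟨sI, by simp [stepPins, hc]⟩
            · obtain ⟨e, he⟩ := hJdone c (by omega) hc2
              exact ⟨e, List.mem_append_left _ he⟩
          intro p hp
          simp only [allPins_cons, icnt, jcnt, List.mem_append] at hp
          rcases hp with hp | hp
          · simp [stepPins] at hp
            rcases hp with rfl | rfl
            · exact hvO
            · exact hvI
          · refine ih (done ++ stepPins k cI cJ (.top sO sI)) (cI+1) (cJ+1) hv' ?_ ?_ ?_
              hdone' hIdone' hJdone' p hp
            · rw [hPF]; simp [allPins_cons, icnt, jcnt, List.append_assoc]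
            · simp [icnt] at hcI; omega
            · simp [jcnt] at hcJ; omega
      | .ist s =>
          obtain ⟨h2, hpin, hv'⟩ := hv
          have hmemS : (s, k-1-cI) ∈ PF := by
            rw [hPF]; simp [stepPins]
          have hDu := hD (I s)
          simp only [DF] at hDu
          rw [sum_ite_unique hI (I s) s rfl, sum_ite_unique hI (I s) s rfl] at hDu
          rw [havalPF s _ hmemS] at hDu
          have hia : iexp k (k-1-cI) = k-1-cI := iexp_of_lt (by omega)
          rw [hia] at hDu
          have hjeq : (∑ s', if J s' = I s then jexp k (ρ s' : ℕ) else 0)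
              = (∑ s', if J s' = I s then jexp k (aval PF s') else 0) := by
            by_cases hex : ∃ s', J s' = I s
            · obtain ⟨s', hs'⟩ := hex
              rw [sum_ite_unique hJ (I s) s' hs', sum_ite_unique hJ (I s) s' hs']
              obtain ⟨c, hc⟩ := hpin s' hs'
              rw [hdone (s', c) hc, havalPF s' c (by rw [hPF]; exact List.mem_append_left _ hc)]
            · push_neg at hex
              rw [sum_ite_none (I s) hex, sum_ite_none (I s) hex]
          rw [hjeq] at hDu
          have heq1 : iexp k (ρ s : ℕ) = k-1-cI := by omega
          have hvS : (ρ s : ℕ) = k-1-cI := iexp_eq_val heq1 (by omega)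
          have hdone' : ∀ p ∈ done ++ stepPins k cI cJ (.ist s), (ρ p.1 : ℕ) = p.2 := by
            intro p hp
            rcases List.mem_append.mp hp with hp | hp
            · exact hdone p hp
            · simp [stepPins] at hp
              subst hp
              exact hvS
          have hIdone' : ∀ c, k - (cI+1) ≤ c → c ≤ k-1 →
              ∃ e, (e, c) ∈ done ++ stepPins k cI cJ (.ist s) := by
            intro c hc1 hc2
            by_cases hc : c = k-1-cI
            · exact ⟨s, by simp [stepPins, hc]⟩
            · obtain ⟨e, he⟩ := hIdone c (by omega) hc2
              exact ⟨e, List.mem_append_left _ he⟩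
          have hJdone' : ∀ c, 2*k-1-cJ ≤ c → c ≤ 2*k-2 →
              ∃ e, (e, c) ∈ done ++ stepPins k cI cJ (.ist s) := by
            intro c hc1 hc2
            obtain ⟨e, he⟩ := hJdone c hc1 hc2
            exact ⟨e, List.mem_append_left _ he⟩
          intro p hp
          simp only [allPins_cons, icnt, jcnt, List.mem_append] at hp
          rcases hp with hp | hp
          · simp [stepPins] at hp
            subst hp
            exact hvS
          · refine ih (done ++ stepPins k cI cJ (.ist s)) (cI+1) cJ hv' ?_ ?_ ?_
              hdone' hIdone' hJdone' p hp
            · rw [hPF]; simp [allPins_cons, icnt, jcnt, List.append_assoc]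
            · simp [icnt] at hcI; omega
            · simp [jcnt] at hcJ; omega
      | .jst s =>
          obtain ⟨h2, hcond, hv'⟩ := hv
          have hmemS : (s, 2*k-2-cJ) ∈ PF := by
            rw [hPF]; simp [stepPins]
          have hDu := hD (J s)
          simp only [DF] at hDu
          rw [sum_ite_unique hJ (J s) s rfl, sum_ite_unique hJ (J s) s rfl] at hDu
          rw [havalPF s _ hmemS] at hDu
          have hjb : jexp k (2*k-2-cJ) = k-1-cJ := by unfold jexp; split <;> omega
          rw [hjb] at hDu
          have hieq : (∑ s', if I s' = J s then iexp k (ρ s' : ℕ) else 0)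
              = (∑ s', if I s' = J s then iexp k (aval PF s') else 0) := by
            by_cases hex : ∃ s', I s' = J s
            · obtain ⟨s', hs'⟩ := hex
              rw [sum_ite_unique hI (J s) s' hs', sum_ite_unique hI (J s) s' hs']
              by_cases hpin : ∃ c, (s', c) ∈ done
              · obtain ⟨c, hc⟩ := hpin
                rw [hdone (s', c) hc, havalPF s' c (by rw [hPF]; exact List.mem_append_left _ hc)]
              · have hcIful : cI = k-1 := by
                  rcases hcond with h | h
                  · exact absurd (h s' hs') hpin
                  · exact h
                push_neg at hpin
                have hle : iexp k (ρ s' : ℕ) ≤ k-1-cI :=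
                  iexp_le_of_unpinned hdone hIdone hpin
                have h0 : iexp k (ρ s' : ℕ) = 0 := by omega
                have h0' : iexp k (aval PF s') = 0 := by
                  by_cases hpf : s' ∈ keys PF
                  · obtain ⟨c, hc⟩ := mem_keys.mp hpf
                    rw [havalPF s' c hc]
                    rw [hPF] at hc
                    rcases List.mem_append.mp hc with hc | hc
                    · exact absurd hc (hpin c)
                    · simp only [allPins_cons, icnt, jcnt, List.mem_append] at hc
                      rcases hc with hc | hc
                      · simp [stepPins] at hc
                        obtain ⟨_, rfl⟩ := hc
                        unfold iexp; split <;> omega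
                      · have hnoI : cntI L = 0 := by simp [icnt] at hcI; omega
                        have := pins_noI L _ _ _ hv' hnoI (s', c) hc
                        simp only at this
                        unfold iexp; split <;> omega
                  · rw [aval_eq_zero hpf]
                    unfold iexp; split <;> omega
                rw [h0, h0']
            · push_neg at hex
              rw [sum_ite_none (J s) hex, sum_ite_none (J s) hex]
          rw [hieq] at hDu
          have heq1 : jexp k (ρ s : ℕ) = k-1-cJ := by omega
          have hvS : (ρ s : ℕ) = 2*k-2-cJ := by
            have := jexp_eq_val hk heq1 (by omega); omega
          have hdone' : ∀ p ∈ done ++ stepPins k cI cJ (.jst s), (ρ p.1 : ℕ) = p.2 := by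
            intro p hp
            rcases List.mem_append.mp hp with hp | hp
            · exact hdone p hp
            · simp [stepPins] at hp
              subst hp
              exact hvS
          have hIdone' : ∀ c, k - cI ≤ c → c ≤ k-1 →
              ∃ e, (e, c) ∈ done ++ stepPins k cI cJ (.jst s) := by
            intro c hc1 hc2
            obtain ⟨e, he⟩ := hIdone c hc1 hc2
            exact ⟨e, List.mem_append_left _ he⟩
          have hJdone' : ∀ c, 2*k-1-(cJ+1) ≤ c → c ≤ 2*k-2 →
              ∃ e, (e, c) ∈ done ++ stepPins k cI cJ (.jst s) := by
            intro c hc1 hc2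
            by_cases hc : c = 2*k-2-cJ
            · exact ⟨s, by simp [stepPins, hc]⟩
            · obtain ⟨e, he⟩ := hJdone c (by omega) hc2
              exact ⟨e, List.mem_append_left _ he⟩
          intro p hp
          simp only [allPins_cons, icnt, jcnt, List.mem_append] at hp
          rcases hp with hp | hp
          · simp [stepPins] at hp
            subst hp
            exact hvS
          · refine ih (done ++ stepPins k cI cJ (.jst s)) cI (cJ+1) hv' ?_ ?_ ?_
              hdone' hIdone' hJdone' p hp
            · rw [hPF]; simp [allPins_cons, icnt, jcnt, List.append_assoc]
            · simp [icnt] at hcI; omega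
            · simp [jcnt] at hcJ; omega

theorem cert_main (hk : 1 ≤ k) {I J : Fin (2*k-1) → Fin n}
    (hI : Function.Injective I) (hJ : Function.Injective J)
    (L : List (VStep k)) (hv : Valid I J [] 0 0 L)
    (hci : cntI L = k-1) (hcj : cntJ L = k-1)
    (hkeys : (keys (allPins k 0 0 L)).Nodup) :
    (Vmat k n (fun i => (X i : MvPolynomial (Fin n) ℤ)) I J).det ≠ 0 ∧
    ∃ d : Fin n →₀ ℕ,
      (Vmat k n (fun i => (X i : MvPolynomial (Fin n) ℤ)) I J).det.coeff d = 1 ∨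
      (Vmat k n (fun i => (X i : MvPolynomial (Fin n) ℤ)) I J).det.coeff d = -1 := by
  classical
  set PF := allPins k 0 0 L with hPFdef
  have hfb : ∀ e, aval PF e < 2*k-1 := by
    intro e
    by_cases hpf : e ∈ keys PF
    · obtain ⟨c, hc⟩ := mem_keys.mp hpf
      rw [aval_eq_of_mem hkeys hc]
      have := pins_val_range L [] 0 0 hv (e, c) hc
      simp only at this
      omega
    · rw [aval_eq_zero hpf]; omega
  have hsnd := pins_snd_nodup L [] 0 0 hv
  have hlen : PF.length = 2*k-2 := by
    rw [hPFdef, pins_length]; omega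
  have hinj : Function.Injective (fun e => (⟨aval PF e, hfb e⟩ : Fin (2*k-1))) := by
    intro e e' hee
    simp only [Fin.mk.injEq] at hee
    by_cases h1 : e ∈ keys PF <;> by_cases h2 : e' ∈ keys PF
    · obtain ⟨c, hc⟩ := mem_keys.mp h1
      obtain ⟨c', hc'⟩ := mem_keys.mp h2
      rw [aval_eq_of_mem hkeys hc, aval_eq_of_mem hkeys hc'] at hee
      subst hee
      have := List.inj_on_of_nodup_map hsnd hc hc' rfl
      exact congrArg Prod.fst this
    · exfalso
      obtain ⟨c, hc⟩ := mem_keys.mp h1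
      rw [aval_eq_of_mem hkeys hc, aval_eq_zero h2] at hee
      have := pins_val_range L [] 0 0 hv (e, c) hc
      simp only at this
      omega
    · exfalso
      obtain ⟨c, hc⟩ := mem_keys.mp h2
      rw [aval_eq_of_mem hkeys hc, aval_eq_zero h1] at hee
      have := pins_val_range L [] 0 0 hv (e', c) hc
      simp only at this
      omega
    · by_contra hne
      have hcard : ((keys PF).toFinset).card = 2*k-2 := by
        rw [List.toFinset_card_of_nodup hkeys]
        simp [keys, hlen]
      have hsub : insert e (insert e' ((keys PF).toFinset)) ⊆ Finset.univ :=
        Finset.subset_univ _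
      have hc1 : e' ∉ (keys PF).toFinset := by simpa using h2
      have hc2 : e ∉ insert e' ((keys PF).toFinset) := by
        simp only [Finset.mem_insert]
        push_neg
        exact ⟨hne, by simpa using h1⟩
      have := Finset.card_le_card hsub
      rw [Finset.card_insert_of_notMem hc2, Finset.card_insert_of_notMem hc1, hcard] at this
      simp [Fintype.card_fin] at this
      omega
  have hbij := Finite.injective_iff_bijective.mp hinj
  set ρ : Equiv.Perm (Fin (2*k-1)) := Equiv.ofBijective _ hbij with hρdef
  have hρf : ∀ e, (ρ e : ℕ) = aval PF e := fun e => rfl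
  have huniq : ∀ σ : Equiv.Perm (Fin (2*k-1)),
      Dr I J (fun e => (σ e : ℕ)) = Dr I J (fun e => (ρ e : ℕ)) → σ = ρ := by
    intro σ hDr
    have hD : ∀ v, DF I J (fun e => (σ e : ℕ)) v = DF I J (aval PF) v := by
      intro v
      calc DF I J (fun e => (σ e : ℕ)) v = Dr I J (fun e => (σ e : ℕ)) v :=
            (Dr_apply I J _ v).symm
        _ = Dr I J (fun e => (ρ e : ℕ)) v := by rw [hDr]
        _ = DF I J (fun e => (ρ e : ℕ)) v := Dr_apply I J _ v
        _ = DF I J (aval PF) v := by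
            congr 1
    have hall := force_aux hk hI hJ σ PF hkeys hD L [] 0 0 hv (by simp [hPFdef])
        (by omega) (by omega) (by simp)
        (by intro c hcc1 hcc2; omega)
        (by intro c hcc1 hcc2; omega)
    apply Equiv.ext
    intro e
    by_cases hpf : e ∈ keys PF
    · obtain ⟨c, hc⟩ := mem_keys.mp hpf
      have h1 : (σ e : ℕ) = c := hall (e, c) hc
      have h2 : (ρ e : ℕ) = c := by rw [hρf]; exact aval_eq_of_mem hkeys hc
      exact Fin.val_injective (h1.trans h2.symm)
    · have h2 : (ρ e : ℕ) = 0 := by rw [hρf]; exact aval_eq_zero hpf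
      have h1 : (σ e : ℕ) = 0 := by
        by_contra h0
        have hcc1 : 1 ≤ (σ e : ℕ) := by omega
        have hcc2 : (σ e : ℕ) < 2*k-1 := (σ e).isLt
        rcases le_or_gt ((σ e : ℕ)) (k-1) with hle | hlt
        · obtain ⟨e'', he''⟩ := pins_cover_I L [] 0 0 hv (σ e : ℕ) hcc1 (by omega) (by omega)
          have hv2 : (σ e'' : ℕ) = (σ e : ℕ) := hall (e'', (σ e : ℕ)) he''
          have : e'' = e := σ.injective (Fin.val_injective hv2)
          subst this
          exact hpf (mem_keys.mpr ⟨_, he''⟩)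
        · obtain ⟨e'', he''⟩ := pins_cover_J hk L [] 0 0 hv (σ e : ℕ) (by omega)
            (by omega) (by omega)
          have hv2 : (σ e'' : ℕ) = (σ e : ℕ) := hall (e'', (σ e : ℕ)) he''
          have : e'' = e := σ.injective (Fin.val_injective hv2)
          subst this
          exact hpf (mem_keys.mpr ⟨_, he''⟩)
      exact Fin.val_injective (h1.trans h2.symm)
  -- the distinguished monomial
  set d : Fin n →₀ ℕ := Dr I J (fun e => (ρ e : ℕ)) with hddef
  have hco : ((Vmat k n (fun i => (X i : MvPolynomial (Fin n) ℤ)) I J).det).coeff d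
      = (Equiv.Perm.sign ρ : ℤ) := by
    rw [det_coeff hk I J d]
    rw [Finset.sum_eq_single ρ]
    · simp [hddef]
    · intro σ _ hσ
      have : ¬ (Dr I J (fun e => (σ e : ℕ)) = d) := fun h => hσ (huniq σ h)
      simp [this]
    · intro h; exact absurd (Finset.mem_univ ρ) h
  rcases Int.units_eq_one_or (Equiv.Perm.sign ρ) with hsgn | hsgn
  · constructor
    · intro h0
      rw [h0] at hco
      simp [hsgn] at hco
    · exact ⟨d, Or.inl (by rw [hco, hsgn]; rfl)⟩
  · constructor
    · intro h0
      rw [h0] at hco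
      simp [hsgn] at hco
    · exact ⟨d, Or.inr (by rw [hco, hsgn]; rfl)⟩

def stepKeys : VStep k → List (Fin (2*k-1))
  | .top a b => [a, b] | .ist s => [s] | .jst s => [s]

lemma keys_allPins (cI cJ : ℕ) (L : List (VStep k)) :
    keys (allPins k cI cJ L) = L.flatMap stepKeys := by
  induction L generalizing cI cJ with
  | nil => simp [keys]
  | cons st L ih =>
      match st with
      | .top a b => simp [keys, stepPins, stepKeys, List.map_append] at ih ⊢; exact ih _ _
      | .ist s => simp [keys, stepPins, stepKeys, List.map_append] at ih ⊢; exact ih _ _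
      | .jst s => simp [keys, stepPins, stepKeys, List.map_append] at ih ⊢; exact ih _ _

lemma cntI_map_ist (l : List (Fin (2*k-1))) : cntI (l.map VStep.ist) = l.length := by
  induction l with
  | nil => simp
  | cons e l ih => simp [ih, icnt]; omega

lemma cntJ_map_ist (l : List (Fin (2*k-1))) : cntJ (l.map VStep.ist) = 0 := by
  induction l with
  | nil => simp
  | cons e l ih => simp [ih, jcnt]

lemma cntI_map_jst (l : List (Fin (2*k-1))) : cntI (l.map VStep.jst) = 0 := by
  induction l with
  | nil => simp
  | cons e l ih => simp [ih, icnt]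

lemma cntJ_map_jst (l : List (Fin (2*k-1))) : cntJ (l.map VStep.jst) = l.length := by
  induction l with
  | nil => simp
  | cons e l ih => simp [ih, jcnt]; omega

lemma cntI_map_top {α : Type*} (f g : α → Fin (2*k-1)) (l : List α) :
    cntI (l.map (fun A => VStep.top (f A) (g A))) = l.length := by
  induction l with
  | nil => simp
  | cons e l ih => simp [ih, icnt]; omega

lemma cntJ_map_top {α : Type*} (f g : α → Fin (2*k-1)) (l : List α) :
    cntJ (l.map (fun A => VStep.top (f A) (g A))) = l.length := by
  induction l with
  | nil => simp
  | cons e l ih => simp [ih, jcnt]; omega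

lemma valid_append {I J : Fin (2*k-1) → Fin n} :
    ∀ (L1 L2 : List (VStep k)) (done : List (Fin (2*k-1) × ℕ)) (cI cJ : ℕ),
      Valid I J done cI cJ L1 →
      Valid I J (done ++ allPins k cI cJ L1) (cI + cntI L1) (cJ + cntJ L1) L2 →
      Valid I J done cI cJ (L1 ++ L2) := by
  intro L1
  induction L1 with
  | nil => intro L2 done cI cJ _ h2; simpa using h2
  | cons st L ih =>
      intro L2 done cI cJ h1 h2
      match st with
      | .top sO sI =>
          obtain ⟨ha, hb, hc, hv⟩ := h1
          refine ⟨ha, hb, hc, ih L2 _ _ _ hv ?_⟩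
          simp only [allPins_cons, icnt, jcnt, cntI_cons, cntJ_cons,
            ← List.append_assoc] at h2
          have e1 : cI + (1 + cntI L) = cI + 1 + cntI L := by omega
          have e2 : cJ + (1 + cntJ L) = cJ + 1 + cntJ L := by omega
          rw [e1, e2] at h2
          exact h2
      | .ist s =>
          obtain ⟨ha, hb, hv⟩ := h1
          refine ⟨ha, hb, ih L2 _ _ _ hv ?_⟩
          simp only [allPins_cons, icnt, jcnt, cntI_cons, cntJ_cons,
            ← List.append_assoc] at h2
          have e1 : cI + (1 + cntI L) = cI + 1 + cntI L := by omega
          have e2 : cJ + (0 + cntJ L) = cJ + cntJ L := by omega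
          have e3 : cJ + 0 = cJ := by omega
          rw [e1, e2, e3] at h2
          exact h2
      | .jst s =>
          obtain ⟨ha, hb, hv⟩ := h1
          refine ⟨ha, hb, ih L2 _ _ _ hv ?_⟩
          simp only [allPins_cons, icnt, jcnt, cntI_cons, cntJ_cons,
            ← List.append_assoc] at h2
          have e2 : cJ + (1 + cntJ L) = cJ + 1 + cntJ L := by omega
          have e1 : cI + (0 + cntI L) = cI + cntI L := by omega
          have e3 : cI + 0 = cI := by omega
          rw [e2, e1, e3] at h2
          exact h2

lemma valid_jsts {I J : Fin (2*k-1) → Fin n} :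
    ∀ (l : List (Fin (2*k-1))) (done : List (Fin (2*k-1) × ℕ)) (cJ : ℕ),
      cJ + l.length ≤ k-1 →
      Valid I J done (k-1) cJ (l.map VStep.jst) := by
  intro l
  induction l with
  | nil => intro done cJ _; trivial
  | cons e l ih =>
      intro done cJ hlen
      refine ⟨by simp at hlen; omega, Or.inr rfl, ?_⟩
      exact ih _ (cJ+1) (by simp at hlen ⊢; omega)

lemma valid_ists {I J : Fin (2*k-1) → Fin n} :
    ∀ (l : List (Fin (2*k-1))) (done : List (Fin (2*k-1) × ℕ)) (cI cJ : ℕ),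
      (∀ (i : ℕ) (hi : i < l.length), ∀ s', J s' = I (l[i]) →
        (∃ c, (s', c) ∈ done) ∨ ∃ (j : ℕ) (hj : j < l.length), j < i ∧ l[j] = s') →
      cI + l.length ≤ k-1 →
      Valid I J done cI cJ (l.map VStep.ist) := by
  intro l
  induction l with
  | nil => intro done cI cJ _ _; trivial
  | cons e l ih =>
      intro done cI cJ hl hlen
      have hlen' : l.length + 1 = (e :: l).length := by simp
      refine ⟨by simp at hlen; omega, ?_, ?_⟩
      · intro s' hs'
        rcases hl 0 (by simp) s' (by simpa using hs') with h | ⟨j, hj, hj0, _⟩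
        · exact h
        · omega
      · apply ih (done ++ stepPins k cI cJ (.ist e)) (cI+1) cJ
        · intro i hi s' hs'
          rcases hl (i+1) (by simp; omega) s' (by simpa using hs') with h | ⟨j, hj, hji, hjv⟩
          · obtain ⟨c, hc⟩ := h
            exact Or.inl ⟨c, List.mem_append_left _ hc⟩
          · match j, hj with
            | 0, _ =>
                left
                refine ⟨k-1-cI, List.mem_append_right _ ?_⟩
                simp only [List.getElem_cons_zero] at hjv
                simp [stepPins, hjv]
            | (j'+1), hj =>
                right
                refine ⟨j', by simp at hj; omega, by omega, ?_⟩
                simpa using hjv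
        · simp at hlen ⊢; omega

lemma valid_tops {I J : Fin (2*k-1) → Fin n} {α : Type*} (f g : α → Fin (2*k-1)) :
    ∀ (l : List α) (done : List (Fin (2*k-1) × ℕ)) (c : ℕ),
      (∀ A ∈ l, I (f A) = J (g A)) →
      c + l.length ≤ k-1 →
      Valid I J done c c (l.map (fun A => VStep.top (f A) (g A))) := by
  intro l
  induction l with
  | nil => intro done c _ _; trivial
  | cons A l ih =>
      intro done c hfg hlen
      refine ⟨hfg A (by simp), by simp at hlen; omega, by simp at hlen; omega, ?_⟩
      exact ih _ (c+1) (fun B hB => hfg B (by simp [hB])) (by simp at hlen ⊢; omega)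

def Closed (I J : Fin (2*k-1) → Fin n) (A : Finset (Fin (2*k-1))) : Prop :=
  ∀ s ∈ A, ∃ f ∈ A, I f = J s

lemma closed_of_eqImg {I J : Fin (2*k-1) → Fin n} {A : Finset (Fin (2*k-1))}
    (h : A.image I = A.image J) : Closed I J A := by
  intro s hs
  have h1 : J s ∈ A.image J := Finset.mem_image_of_mem J hs
  rw [← h] at h1
  obtain ⟨f, hf, hfe⟩ := Finset.mem_image.mp h1
  exact ⟨f, hf, hfe⟩

lemma eqImg_of_closed {I J : Fin (2*k-1) → Fin n} {A : Finset (Fin (2*k-1))}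
    (hI : Function.Injective I) (hJ : Function.Injective J)
    (h : Closed I J A) : A.image I = A.image J := by
  have hsub : A.image J ⊆ A.image I := by
    intro v hv
    obtain ⟨s, hs, rfl⟩ := Finset.mem_image.mp hv
    obtain ⟨f, hf, hfe⟩ := h s hs
    exact Finset.mem_image.mpr ⟨f, hf, hfe⟩
  have h1 : (A.image I).card = A.card := Finset.card_image_of_injective A hI
  have h2 : (A.image J).card = A.card := Finset.card_image_of_injective A hJ
  exact (Finset.eq_of_subset_of_card_le hsub (by omega)).symm

lemma closed_inter {I J : Fin (2*k-1) → Fin n} {A B : Finset (Fin (2*k-1))}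
    (hI : Function.Injective I)
    (hA : Closed I J A) (hB : Closed I J B) : Closed I J (A ∩ B) := by
  intro s hs
  rw [Finset.mem_inter] at hs
  obtain ⟨f, hf, hfe⟩ := hA s hs.1
  obtain ⟨g, hg, hge⟩ := hB s hs.2
  have hfg : f = g := hI (hfe.trans hge.symm)
  subst hfg
  exact ⟨f, Finset.mem_inter.mpr ⟨hf, hg⟩, hfe⟩

noncomputable def chE (hk : 1 ≤ k) (A : Finset (Fin (2*k-1))) : Fin (2*k-1) :=
  if h : A.Nonempty then h.choose else ⟨0, by omega⟩

lemma chE_mem (hk : 1 ≤ k) {A : Finset (Fin (2*k-1))} (h : A.Nonempty) : chE hk A ∈ A := by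
  rw [chE, dif_pos h]; exact h.choose_spec

noncomputable def nxtE (hk : 1 ≤ k) (I J : Fin (2*k-1) → Fin n)
    (A : Finset (Fin (2*k-1))) : Fin (2*k-1) :=
  if h : ∃ f ∈ A, I f = J (chE hk A) then h.choose else ⟨0, by omega⟩

lemma nxtE_spec (hk : 1 ≤ k) {I J : Fin (2*k-1) → Fin n} {A : Finset (Fin (2*k-1))}
    (h : ∃ f ∈ A, I f = J (chE hk A)) :
    nxtE hk I J A ∈ A ∧ I (nxtE hk I J A) = J (chE hk A) := by
  rw [nxtE, dif_pos h]; exact ⟨h.choose_spec.1, h.choose_spec.2⟩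

lemma flat_sorted {α : Type*} (g : ℕ → List α) (f : α → ℕ)
    (hg : ∀ m, ∀ x ∈ g m, f x = m) (hnd : ∀ m, (g m).Nodup) :
    ∀ N, ((List.range N).flatMap g).Nodup ∧
      List.Pairwise (fun a b => f a ≤ f b) ((List.range N).flatMap g) := by
  intro N
  induction N with
  | zero => simp
  | succ N ih =>
      rw [List.range_succ, List.flatMap_append]
      simp only [List.flatMap_cons, List.flatMap_nil, List.append_nil]
      have hmem : ∀ x ∈ (List.range N).flatMap g, f x < N := by
        intro x hx
        obtain ⟨m, hm, hxm⟩ := List.mem_flatMap.mp hx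
        rw [hg m x hxm]
        exact List.mem_range.mp hm
      constructor
      · rw [List.nodup_append]
        refine ⟨ih.1, hnd N, ?_⟩
        intro x hx _ hx' rfl
        have h1 := hmem x hx
        have h2 := hg N x hx'
        omega
      · rw [List.pairwise_append]
        refine ⟨ih.2, ?_, ?_⟩
        · apply List.pairwise_of_forall_mem_list
          intro a ha b hb
          rw [hg N a ha, hg N b hb]
        · intro a ha b hb
          have := hmem a ha
          rw [hg N b hb]
          omega

lemma flat_pairs_nodup {α β : Type*} (l : List α) (F : α → List β) (Aset : α → Finset β)
    (hnd : l.Nodup) (hFnd : ∀ A ∈ l, (F A).Nodup)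
    (hFsub : ∀ A ∈ l, ∀ x ∈ F A, x ∈ Aset A)
    (hdisjp : ∀ A ∈ l, ∀ B ∈ l, A ≠ B → ∀ x, x ∈ Aset A → x ∈ Aset B → False) :
    (l.flatMap F).Nodup := by
  induction l with
  | nil => simp
  | cons A l ih =>
      rw [List.flatMap_cons, List.nodup_append]
      rw [List.nodup_cons] at hnd
      refine ⟨hFnd A (by simp), ih hnd.2 (fun B hB => hFnd B (by simp [hB]))
        (fun B hB => hFsub B (by simp [hB]))
        (fun B hB C hC hBC => hdisjp B (by simp [hB]) C (by simp [hC]) hBC), ?_⟩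
      intro z hz _ hz' rfl
      obtain ⟨B, hB, hzB⟩ := List.mem_flatMap.mp hz'
      have hAB : A ≠ B := fun h => hnd.1 (h ▸ hB)
      exact hdisjp A (by simp) B (by simp [hB]) hAB z (hFsub A (by simp) z hz)
        (hFsub B (by simp [hB]) z hzB)

theorem build (hk : 1 ≤ k) {I J : Fin (2*k-1) → Fin n}
    (hI : Function.Injective I) (hJ : Function.Injective J)
    (𝒜 : Finset (Finset (Fin (2*k-1))))
    (hmesp : ∀ A ∈ 𝒜, MinimalEqualSubPair I J A)
    (hdisj : (𝒜 : Set (Finset (Fin (2*k-1)))).Pairwise fun A B => Disjoint A B)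
    (hfree : FreeOfEqualities I J (Finset.univ \ 𝒜.sup id))
    (hcard : 𝒜.card ≤ k) :
    ∃ L : List (VStep k), Valid I J [] 0 0 L ∧ cntI L = k-1 ∧ cntJ L = k-1 ∧
      (keys (allPins k 0 0 L)).Nodup := by
  classical
  set ch := chE (k := k) hk with hchdef
  set nxt := nxtE hk I J with hnxtdef
  have hA_ne : ∀ A ∈ 𝒜, A.Nonempty := fun A hA => (hmesp A hA).1
  have hA_closed : ∀ A ∈ 𝒜, Closed I J A := fun A hA => closed_of_eqImg (hmesp A hA).2.1
  have hch_mem : ∀ A ∈ 𝒜, ch A ∈ A := fun A hA => chE_mem hk (hA_ne A hA)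
  have hnxt_spec : ∀ A ∈ 𝒜, nxt A ∈ A ∧ I (nxt A) = J (ch A) := by
    intro A hA
    exact nxtE_spec hk (hA_closed A hA (ch A) (hch_mem A hA))
  have hmin : ∀ A ∈ 𝒜, ∀ B ⊆ A, B.Nonempty → Closed I J B → B = A := by
    intro A hA B hBA hBne hBcl
    by_contra hne
    exact (hmesp A hA).2.2 B (ssubset_of_subset_of_ne hBA hne) hBne
      (eqImg_of_closed hI hJ hBcl)
  have hloopA : ∀ A ∈ 𝒜, ¬ 1 < A.card → A = {ch A} ∧ I (ch A) = J (ch A) := by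
    intro A hA hcard1
    have h1 : A.card = 1 := by
      have := Finset.card_pos.mpr (hA_ne A hA); omega
    obtain ⟨a, ha⟩ := Finset.card_eq_one.mp h1
    have hch : ch A = a := by
      have h2 := hch_mem A hA
      rw [ha] at h2
      rw [ha]
      simpa using h2
    refine ⟨by rw [hch]; exact ha, ?_⟩
    have himg := (hmesp A hA).2.1
    rw [ha] at himg
    simp only [Finset.image_singleton, Finset.singleton_inj] at himg
    rw [hch]
    exact himg
  have hbig_ne : ∀ A ∈ 𝒜, 1 < A.card → nxt A ≠ ch A := by
    intro A hA hb heq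
    have h1 : I (ch A) = J (ch A) := by
      have h2 := (hnxt_spec A hA).2
      rw [heq] at h2
      exact h2
    have hss : ({ch A} : Finset (Fin (2*k-1))) ⊂ A := by
      rw [Finset.ssubset_iff_of_subset (Finset.singleton_subset_iff.mpr (hch_mem A hA))]
      obtain ⟨z, hz, hzne⟩ := Finset.exists_mem_ne hb (ch A)
      exact ⟨z, hz, by simpa using hzne⟩
    exact (hmesp A hA).2.2 {ch A} hss ⟨ch A, Finset.mem_singleton_self _⟩ (by simp [h1])
  have hdisj' : ∀ A ∈ 𝒜, ∀ B ∈ 𝒜, A ≠ B → ∀ z, z ∈ A → z ∈ B → False := by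
    intro A hA B hB hne z hzA hzB
    have := hdisj (Finset.mem_coe.mpr hA) (Finset.mem_coe.mpr hB) hne
    exact Finset.disjoint_left.mp this hzA hzB
  set piece : Finset (Fin (2*k-1)) → Finset (Fin (2*k-1)) :=
    fun A => if 1 < A.card then {ch A, nxt A} else A with hpiece
  have hpiece_sub : ∀ A ∈ 𝒜, piece A ⊆ A := by
    intro A hA z hz
    rw [hpiece] at hz
    dsimp at hz
    split at hz
    · simp at hz
      rcases hz with rfl | rfl
      exacts [hch_mem A hA, (hnxt_spec A hA).1]
    · exact hz
  set Rem := 𝒜.biUnion piece with hRem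
  set Rest := Finset.univ \ Rem with hRest
  have hRest_mem : ∀ z, z ∈ Rest ↔ z ∉ Rem := by
    intro z; rw [hRest, Finset.mem_sdiff]; simp
  set bigs := 𝒜.filter (fun A => 1 < A.card) with hbigs
  set loops := 𝒜.filter (fun A => ¬ 1 < A.card) with hloops
  set b := bigs.card with hbdef
  set sl := loops.card with hsldef
  have hbs : b + sl = 𝒜.card := by
    rw [hbdef, hsldef, hbigs, hloops]
    exact Finset.card_filter_add_card_filter_not (s := 𝒜) (fun A => 1 < A.card)
  have hRemcard : Rem.card = 2*b + sl := by
    rw [hRem, Finset.card_biUnion (fun A hA B hB hne => Finset.disjoint_left.mpr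
      (fun z hz hz' => (hdisj' A hA B hB hne z (hpiece_sub A hA hz) (hpiece_sub B hB hz')).elim))]
    rw [← Finset.sum_filter_add_sum_filter_not 𝒜 (fun A => 1 < A.card) (fun A => (piece A).card)]
    have h1 : ∀ A ∈ bigs, (piece A).card = 2 := by
      intro A hA
      rw [hbigs, Finset.mem_filter] at hA
      rw [hpiece]
      dsimp
      rw [if_pos hA.2]
      have hne2 : ch A ∉ ({nxt A} : Finset (Fin (2*k-1))) := by
        simp only [Finset.mem_singleton]
        intro h
        exact hbig_ne A hA.1 hA.2 h.symm
      rw [Finset.card_insert_of_notMem hne2, Finset.card_singleton]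
    have h2 : ∀ A ∈ loops, (piece A).card = 1 := by
      intro A hA
      rw [hloops, Finset.mem_filter] at hA
      rw [hpiece]
      dsimp
      rw [if_neg hA.2, (hloopA A hA.1 hA.2).1]
      simp
    rw [Finset.sum_congr rfl h1, Finset.sum_congr rfl h2]
    simp [hbdef, hsldef, Finset.sum_const]
    ring
  have hRestcard : Rest.card = (2*k-1) - (2*b + sl) := by
    rw [hRest, Finset.card_sdiff_of_subset (Finset.subset_univ _), hRemcard]
    simp
  have hRemle : 2*b + sl ≤ 2*k-1 := by
    rw [← hRemcard]
    calc Rem.card ≤ Finset.univ.card := Finset.card_le_univ _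
    _ = 2*k-1 := by simp
  have hcard' : b + sl ≤ k := by rw [hbs]; exact hcard
  have hble : b ≤ k-1 := by omega
  -- no nonempty closed subset of Rest
  have hkey : ∀ C : Finset (Fin (2*k-1)), Closed I J C → C ⊆ Rest → C = ∅ := by
    intro C hC hCR
    by_contra hne
    have hCne : C.Nonempty := Finset.nonempty_iff_ne_empty.mpr hne
    by_cases hmeet : ∃ A ∈ 𝒜, (C ∩ A).Nonempty
    · obtain ⟨A, hA, hm⟩ := hmeet
      have hIC := closed_inter hI hC (hA_closed A hA)
      have hEq : C ∩ A = A := hmin A hA (C ∩ A) Finset.inter_subset_right hm hIC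
      have hchA : ch A ∈ C := by
        have h1 : ch A ∈ C ∩ A := by rw [hEq]; exact hch_mem A hA
        exact (Finset.mem_inter.mp h1).1
      have hchRem : ch A ∈ Rem := by
        refine Finset.mem_biUnion.mpr ⟨A, hA, ?_⟩
        rw [hpiece]
        dsimp
        split
        · simp
        · exact hch_mem A hA
      have := hCR hchA
      rw [hRest, Finset.mem_sdiff] at this
      exact this.2 hchRem
    · push_neg at hmeet
      apply hfree C ?_ hCne (eqImg_of_closed hI hJ hC)
      intro e he
      rw [Finset.mem_sdiff]
      refine ⟨Finset.mem_univ _, ?_⟩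
      intro hsup
      rw [Finset.mem_sup] at hsup
      obtain ⟨A, hA, heA⟩ := hsup
      exact (Finset.not_nonempty_iff_eq_empty.mpr (hmeet A hA)) ⟨e, Finset.mem_inter.mpr ⟨he, heA⟩⟩
  -- edge relation on Rest and acyclicity
  set rr : Fin (2*k-1) → Fin (2*k-1) → Prop :=
    fun a c => a ∈ Rest ∧ c ∈ Rest ∧ J a = I c with hrr
  have hacyc : ∀ e, ¬ Relation.TransGen rr e e := by
    intro e he
    have heR : e ∈ Rest := by
      obtain ⟨y0, hy0, _⟩ := (Relation.TransGen.head'_iff).mp he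
      exact hy0.1
    set Sf := insert e (Rest.filter
      (fun z => Relation.TransGen rr e z ∧ Relation.TransGen rr z e)) with hSf
    have hSfR : Sf ⊆ Rest := by
      intro z hz
      rcases Finset.mem_insert.mp hz with rfl | hz'
      · exact heR
      · exact (Finset.mem_filter.mp hz').1
    have hSfcl : Closed I J Sf := by
      intro z hz
      have hze : Relation.TransGen rr z e := by
        rcases Finset.mem_insert.mp hz with rfl | hz'
        · exact he
        · exact (Finset.mem_filter.mp hz').2.2
      obtain ⟨w, hzw, hwe⟩ := (Relation.TransGen.head'_iff).mp hze
      refine ⟨w, ?_, hzw.2.2.symm⟩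
      have hew : Relation.TransGen rr e w := by
        rcases Finset.mem_insert.mp hz with rfl | hz'
        · exact Relation.TransGen.single hzw
        · exact Relation.TransGen.tail (Finset.mem_filter.mp hz').2.1 hzw
      rcases Relation.reflTransGen_iff_eq_or_transGen.mp hwe with h | hwe'
      · rw [← h]; exact Finset.mem_insert_self _ _
      · exact Finset.mem_insert_of_mem (Finset.mem_filter.mpr ⟨hzw.2.1, hew, hwe'⟩)
    have h0 := hkey Sf hSfcl hSfR
    have h1 : e ∈ Sf := Finset.mem_insert_self _ _
    rw [h0] at h1
    simp at h1
  set μ : Fin (2*k-1) → ℕ :=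
    fun e => (Rest.filter (fun a => Relation.TransGen rr a e)).card with hμdef
  have hμ : ∀ a c, rr a c → μ a < μ c := by
    intro a c hac
    apply Finset.card_lt_card
    rw [Finset.ssubset_iff_of_subset]
    · refine ⟨a, Finset.mem_filter.mpr ⟨hac.1, Relation.TransGen.single hac⟩, ?_⟩
      intro hmem
      exact hacyc a (Finset.mem_filter.mp hmem).2
    · intro z hz
      rw [Finset.mem_filter] at hz ⊢
      exact ⟨hz.1, Relation.TransGen.tail hz.2 hac⟩
  -- sorted list of Rest
  set RL := (List.range (2*k)).flatMap
    (fun m => (Rest.filter (fun e => μ e = m)).toList) with hRL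
  obtain ⟨hRLnd, hRLsort⟩ := flat_sorted (fun m => (Rest.filter (fun e => μ e = m)).toList) μ
    (fun m z hz => (Finset.mem_filter.mp (Finset.mem_toList.mp hz)).2)
    (fun m => Finset.nodup_toList _) (2*k)
  have hμlt : ∀ e ∈ Rest, μ e < 2*k := by
    intro e he
    have h1 : μ e ≤ Rest.card := Finset.card_filter_le _ _
    have h2 : Rest.card ≤ Finset.univ.card := Finset.card_le_univ _
    simp at h2
    omega
  have hRLmem : ∀ e, e ∈ RL ↔ e ∈ Rest := by
    intro e
    rw [hRL]
    constructor
    · intro h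
      obtain ⟨m, _, hm⟩ := List.mem_flatMap.mp h
      exact (Finset.mem_filter.mp (Finset.mem_toList.mp hm)).1
    · intro h
      refine List.mem_flatMap.mpr ⟨μ e, List.mem_range.mpr (hμlt e h), ?_⟩
      exact Finset.mem_toList.mpr (Finset.mem_filter.mpr ⟨h, rfl⟩)
  have hRLlen : RL.length = Rest.card := by
    have h1 : RL.toFinset = Rest := by
      ext e; rw [List.mem_toFinset]; exact hRLmem e
    rw [← h1, List.toFinset_card_of_nodup hRLnd]
  -- the cut
  set x := k-1-b with hx
  have hxle : x ≤ RL.length := by rw [hRLlen, hRestcard]; omega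
  set P := RL.take x with hP
  set S := RL.drop (x+1) with hS
  have hPlen : P.length = x := by rw [hP, List.length_take]; omega
  have hSlen : S.length = RL.length - (x+1) := by rw [hS, List.length_drop]
  set y := (k-1) - b - S.length with hy
  have hloopsLen : loops.toList.length = sl := Finset.length_toList _
  set lE := (loops.toList.map ch).take y with hlE
  have hylesl : y ≤ sl := by omega
  have hlElen : lE.length = y := by
    rw [hlE, List.length_take, List.length_map, hloopsLen]; omega
  -- membership facts
  have hPmem : ∀ e ∈ P, e ∈ Rest := fun e he => (hRLmem e).mp (List.take_subset _ _ he)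
  have hSmem : ∀ e ∈ S, e ∈ Rest := fun e he => (hRLmem e).mp (List.drop_subset _ _ he)
  have hlEmem : ∀ e ∈ lE, ∃ B ∈ 𝒜, ¬ 1 < B.card ∧ e = ch B := by
    intro e he
    have := List.take_subset _ _ he
    obtain ⟨B, hB, rfl⟩ := List.mem_map.mp this
    have hB' := Finset.mem_filter.mp (Finset.mem_toList.mp hB)
    exact ⟨B, hB'.1, hB'.2, rfl⟩
  have hlERem : ∀ e ∈ lE, e ∈ Rem := by
    intro e he
    obtain ⟨B, hB, hBc, rfl⟩ := hlEmem e he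
    refine Finset.mem_biUnion.mpr ⟨B, hB, ?_⟩
    rw [hpiece]
    dsimp
    rw [if_neg hBc]
    exact hch_mem B hB
  -- the step list
  set Ltops := bigs.toList.map (fun A => VStep.top (nxt A) (ch A)) with hLtops
  set Lists := P.map VStep.ist with hLists
  set Ljsts := (S ++ lE).map VStep.jst with hLjsts
  refine ⟨Ltops ++ (Lists ++ Ljsts), ?_, ?_, ?_, ?_⟩
  · -- Valid
    apply valid_append
    · apply valid_tops
      · intro A hA
        exact (hnxt_spec A (Finset.mem_filter.mp (Finset.mem_toList.mp hA)).1).2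
      · rw [Finset.length_toList]
        omega
    · rw [hLtops, cntI_map_top, cntJ_map_top, Finset.length_toList, List.nil_append]
      rw [← hbdef]
      have hz0 : 0 + b = b := by omega
      rw [hz0]
      apply valid_append
      · apply valid_ists
        · -- the predecessor condition
          intro i hi s' hs'
          have hiP : P[i] ∈ Rest := by
            apply hPmem
            exact List.getElem_mem hi
          by_cases hsR : s' ∈ Rest
          · right
            have hrr' : rr s' P[i] := ⟨hsR, hiP, hs'⟩
            have hμ' : μ s' < μ P[i] := hμ _ _ hrr'
            have hsRL : s' ∈ RL := (hRLmem s').mpr hsR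
            obtain ⟨j0, hj0, hj0v⟩ := List.getElem_of_mem hsRL
            have hiRL : i < RL.length := by
              rw [hPlen] at hi; omega
            have hPi : P[i] = RL[i] := List.getElem_take
            have hij : j0 < i := by
              rcases lt_trichotomy j0 i with h | h | h
              · exact h
              · exfalso
                have hse : s' = P[i] := by
                  subst h
                  exact (hPi.trans hj0v).symm
                rw [hse] at hμ'
                omega
              · exfalso
                have h6 := (List.pairwise_iff_getElem.mp hRLsort) i j0 hiRL hj0 h
                rw [hj0v] at h6
                rw [← hPi] at h6
                omega
            refine ⟨j0, by omega, hij, ?_⟩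
            exact List.getElem_take.trans hj0v
          · left
            have hsRem : s' ∈ Rem := by
              by_contra h
              exact hsR ((hRest_mem s').mpr h)
            obtain ⟨A, hA, hsp⟩ := Finset.mem_biUnion.mp hsRem
            by_cases hbigA : 1 < A.card
            · rw [hpiece] at hsp
              dsimp at hsp
              rw [if_pos hbigA] at hsp
              have hAb : A ∈ bigs.toList :=
                Finset.mem_toList.mpr (Finset.mem_filter.mpr ⟨hA, hbigA⟩)
              have hkeymem : s' ∈ keys (allPins k 0 0 Ltops) := by
                rw [keys_allPins, hLtops, List.flatMap_map]
                refine List.mem_flatMap.mpr ⟨A, hAb, ?_⟩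
                simp only [stepKeys]
                simp at hsp ⊢
                tauto
              exact mem_keys.mp hkeymem
            · exfalso
              rw [hpiece] at hsp
              dsimp at hsp
              rw [if_neg hbigA] at hsp
              obtain ⟨hAeq, hIJ⟩ := hloopA A hA hbigA
              rw [hAeq] at hsp
              simp at hsp
              have hPis : P[i] = s' := by
                apply hI
                rw [← hs', hsp]
                exact hIJ.symm
              exact hsR (by rw [← hPis]; exact hiP)
        · rw [hPlen]; omega
      · have e1 : b + cntI Lists = k-1 := by
          rw [hLists, cntI_map_ist, hPlen]; omega
        have e2 : b + cntJ Lists = b := by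
          rw [hLists, cntJ_map_ist]
          omega
        rw [e1, e2, hLjsts]
        apply valid_jsts
        rw [List.length_append, hlElen]
        omega
  · -- cntI
    rw [cntI_append, cntI_append, hLtops, hLists, hLjsts, cntI_map_top, cntI_map_ist,
      cntI_map_jst, Finset.length_toList, hPlen]
    omega
  · -- cntJ
    rw [cntJ_append, cntJ_append, hLtops, hLists, hLjsts, cntJ_map_top, cntJ_map_ist,
      cntJ_map_jst, Finset.length_toList, List.length_append, hlElen]
    omega
  · -- Nodup keys
    rw [keys_allPins, List.flatMap_append, List.flatMap_append]
    have hT : Ltops.flatMap stepKeys = bigs.toList.flatMap (fun A => [nxt A, ch A]) := by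
      rw [hLtops, List.flatMap_map]
      simp only [stepKeys]
    have hIs : Lists.flatMap stepKeys = P := by
      rw [hLists, List.flatMap_map]
      simp [stepKeys]
    have hJs : Ljsts.flatMap stepKeys = S ++ lE := by
      rw [hLjsts, List.flatMap_map]
      simp [stepKeys]
    rw [hT, hIs, hJs]
    have hTnd : (bigs.toList.flatMap (fun A => [nxt A, ch A])).Nodup := by
      apply flat_pairs_nodup _ _ (fun A => A) (Finset.nodup_toList _)
      · intro A hA
        simp
        exact hbig_ne A (Finset.mem_filter.mp (Finset.mem_toList.mp hA)).1
          (Finset.mem_filter.mp (Finset.mem_toList.mp hA)).2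
      · intro A hA z hz
        have hA' := Finset.mem_filter.mp (Finset.mem_toList.mp hA)
        simp at hz
        rcases hz with rfl | rfl
        exacts [(hnxt_spec A hA'.1).1, hch_mem A hA'.1]
      · intro A hA B hB hAB z hzA hzB
        exact hdisj' A (Finset.mem_filter.mp (Finset.mem_toList.mp hA)).1
          B (Finset.mem_filter.mp (Finset.mem_toList.mp hB)).1 hAB z hzA hzB
    have hTRem : ∀ z ∈ bigs.toList.flatMap (fun A => [nxt A, ch A]),
        ∃ A ∈ 𝒜, 1 < A.card ∧ z ∈ A ∧ z ∈ Rem := by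
      intro z hz
      obtain ⟨A, hA, hz'⟩ := List.mem_flatMap.mp hz
      have hA' := Finset.mem_filter.mp (Finset.mem_toList.mp hA)
      have hzRem : z ∈ Rem := by
        refine Finset.mem_biUnion.mpr ⟨A, hA'.1, ?_⟩
        rw [hpiece]
        dsimp
        rw [if_pos hA'.2]
        simp at hz' ⊢
        tauto
      simp at hz'
      rcases hz' with rfl | rfl
      exacts [⟨A, hA'.1, hA'.2, (hnxt_spec A hA'.1).1, hzRem⟩,
        ⟨A, hA'.1, hA'.2, hch_mem A hA'.1, hzRem⟩]
    have hPnd : P.Nodup := List.Nodup.sublist (List.take_sublist _ _) hRLnd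
    have hSnd : S.Nodup := List.Nodup.sublist (List.drop_sublist _ _) hRLnd
    have hlnd : (loops.toList.map ch).Nodup := by
      apply List.Nodup.map_on ?_ (Finset.nodup_toList _)
      intro A hA B hB hAB
      by_contra hne
      exact hdisj' A (Finset.mem_filter.mp (Finset.mem_toList.mp hA)).1
        B (Finset.mem_filter.mp (Finset.mem_toList.mp hB)).1 hne (ch A)
        (hch_mem A (Finset.mem_filter.mp (Finset.mem_toList.mp hA)).1)
        (hAB ▸ hch_mem B (Finset.mem_filter.mp (Finset.mem_toList.mp hB)).1)
    have hlEnd : lE.Nodup := List.Nodup.sublist (List.take_sublist _ _) hlnd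
    have hPS : ∀ a ∈ P, a ∉ S := by
      intro a haP haS
      have h2 : (RL.take x ++ RL.drop x).Nodup := by
        rw [List.take_append_drop]; exact hRLnd
      have h3 := (List.nodup_append.mp h2).2.2
      apply h3 a haP a ?_ rfl
      have hsub : RL.drop (x+1) ⊆ RL.drop x := by
        intro z hz
        have hdd : RL.drop (x+1) = (RL.drop x).drop 1 := by
          rw [List.drop_drop]
        rw [hdd] at hz
        exact List.drop_subset _ _ hz
      exact hsub haS
    rw [List.nodup_append, List.nodup_append]
    refine ⟨hTnd, ⟨hPnd, ?_, ?_⟩, ?_⟩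
    · rw [List.nodup_append]
      refine ⟨hSnd, hlEnd, ?_⟩
      intro a haS _ halE rfl
      have h1 := hSmem a haS
      rw [hRest_mem] at h1
      exact h1 (hlERem a halE)
    · intro a haP _ ha' rfl
      rcases List.mem_append.mp ha' with haS | halE
      · exact hPS a haP haS
      · have h1 := hPmem a haP
        rw [hRest_mem] at h1
        exact h1 (hlERem a halE)
    · intro a haT _ ha' rfl
      obtain ⟨A, hA, hbigA, haA, haRem⟩ := hTRem a haT
      rcases List.mem_append.mp ha' with haP | ha''
      · have h1 := hPmem a haP
        rw [hRest_mem] at h1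
        exact h1 haRem
      rcases List.mem_append.mp ha'' with haS | halE
      · have h1 := hSmem a haS
        rw [hRest_mem] at h1
        exact h1 haRem
      · obtain ⟨B, hB, hBc, haB⟩ := hlEmem a halE
        have hABne : A ≠ B := fun h => hBc (h ▸ hbigA)
        exact hdisj' A hA B hB hABne a haA (haB ▸ hch_mem B hB)

end S7

/-- If the decomposition of `(I, J)` into minimal equal sub-pairs uses at most `k` sets,
then `det (V_{I,J}(X)) ≠ 0` in `ℤ[X₁,…,X_n]`, and its expansion contains a monomial
with coefficient `±1`. -/
theorem stmt7 (n k : ℕ) (hk : 1 ≤ k) (I J : Fin (2 * k - 1) → Fin n)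
    (hI : Function.Injective I) (hJ : Function.Injective J)
    (𝒜 : Finset (Finset (Fin (2 * k - 1))))
    (hmesp : ∀ A ∈ 𝒜, MinimalEqualSubPair I J A)
    (hdisj : (𝒜 : Set (Finset (Fin (2 * k - 1)))).Pairwise fun A B => Disjoint A B)
    (hfree : FreeOfEqualities I J (Finset.univ \ 𝒜.sup id))
    (hcard : 𝒜.card ≤ k) :
    (Vmat k n (fun i => (X i : MvPolynomial (Fin n) ℤ)) I J).det ≠ 0 ∧
    ∃ d : Fin n →₀ ℕ,
      (Vmat k n (fun i => (X i : MvPolynomial (Fin n) ℤ)) I J).det.coeff d = 1 ∨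
      (Vmat k n (fun i => (X i : MvPolynomial (Fin n) ℤ)) I J).det.coeff d = -1 := by
  obtain ⟨L, hv, hci, hcj, hkeys⟩ := S7.build hk hI hJ 𝒜 hmesp hdisj hfree hcard
  exact S7.cert_main hk hI hJ L hv hci hcj hkeys
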